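/- Let A be a finitely generated commutative Hopf algebra over a field k of characteristic zero, equipped with a Hopf algebra grading A = ⊕_{i≥0} A(i). Then the largest separable k-subalgebra π₀A of A equals the largest separable k-subalgebra π₀A(0) of A(0); in particular π₀A ⊆ A(0). -/

import Mathlib

open TensorProduct DirectSum

variable (k A : Type*) [Field k] [CommRing A] [HopfAlgebra k A]
  (𝒜 : ℕ → Submodule k A) [GradedAlgebra 𝒜]

/-- The degree-zero component `A(0)` of a graded algebra, as a subalgebra. -/
def gradeZeroSubalgebra : Subalgebra k A :=
  (𝒜 0).toSubalgebra (SetLike.one_mem_graded 𝒜)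
    (fun a b ha hb => by simpa using SetLike.mul_mem_graded ha hb)

/-- The largest separable `k`-subalgebra `π₀A` of a commutative `k`-algebra `A`: the sum
of all separable subalgebras. -/
noncomputable def piZero (k A : Type*) [Field k] [CommRing A] [Algebra k A] :
    Subalgebra k A :=
  sSup {C : Subalgebra k A | Algebra.IsSeparable k ↥C}

section Aux

variable {k₀ A₀ : Type*} [Field k₀] [CommRing A₀] [Algebra k₀ A₀]
  (ℬ : ℕ → Submodule k₀ A₀) [GradedAlgebra ℬ]

/-- The submodule of elements whose homogeneous components vanish below degree `m`. -/
def tailSubmodule (m : ℕ) : Submodule k₀ A₀ := ⨆ (i : ℕ) (_ : m ≤ i), ℬ i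

lemma mem_tailSubmodule_of_components (m : ℕ) (y : A₀)
    (h : ∀ i < m, (DirectSum.decompose ℬ y i : A₀) = 0) : y ∈ tailSubmodule ℬ m := by
  classical
  rw [← DirectSum.sum_support_decompose ℬ y]
  refine Submodule.sum_mem _ fun i _ => ?_
  rcases lt_or_ge i m with hlt | hle
  · rw [h i hlt]; exact zero_mem _
  · exact Submodule.mem_iSup_of_mem i
      (Submodule.mem_iSup_of_mem hle (SetLike.coe_mem _))

lemma mem_tailSubmodule_zero (y : A₀) : y ∈ tailSubmodule ℬ 0 :=
  mem_tailSubmodule_of_components ℬ 0 y (fun i hi => absurd hi (Nat.not_lt_zero i))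

lemma tailSubmodule_antitone {a b : ℕ} (h : a ≤ b) :
    tailSubmodule ℬ b ≤ tailSubmodule ℬ a :=
  iSup₂_le fun i hi => le_iSup₂_of_le i (le_trans h hi) le_rfl

lemma components_eq_zero_of_mem_tailSubmodule {m : ℕ} {y : A₀}
    (hy : y ∈ tailSubmodule ℬ m) : ∀ i < m, (DirectSum.decompose ℬ y i : A₀) = 0 := by
  refine Submodule.iSup_induction (x := y)
    (motive := fun z => ∀ i < m, (DirectSum.decompose ℬ z i : A₀) = 0) _ hy ?_ ?_ ?_
  · intro j z hz i hi
    rcases le_or_gt m j with hmj | hmj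
    · rw [iSup_pos hmj] at hz
      exact DirectSum.decompose_of_mem_ne ℬ hz (by omega)
    · rw [iSup_neg (by omega)] at hz
      simp only [Submodule.mem_bot] at hz
      simp [hz]
  · intro i _; simp
  · intro a b ha hb i hi
    rw [DirectSum.decompose_add]
    simp [DirectSum.add_apply, ha i hi, hb i hi]

lemma tailSubmodule_mul {a b : ℕ} {y z : A₀} (hy : y ∈ tailSubmodule ℬ a)
    (hz : z ∈ tailSubmodule ℬ b) : y * z ∈ tailSubmodule ℬ (a + b) := by
  refine Submodule.iSup_induction (x := y)
    (motive := fun w => w * z ∈ tailSubmodule ℬ (a + b)) _ hy ?_ ?_ ?_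
  · intro i w hw
    rcases le_or_gt a i with hai | hai
    · rw [iSup_pos hai] at hw
      refine Submodule.iSup_induction (x := z)
        (motive := fun v => w * v ∈ tailSubmodule ℬ (a + b)) _ hz ?_ ?_ ?_
      · intro j v hv
        rcases le_or_gt b j with hbj | hbj
        · rw [iSup_pos hbj] at hv
          exact Submodule.mem_iSup_of_mem (i + j)
            (Submodule.mem_iSup_of_mem (add_le_add hai hbj)
              (SetLike.mul_mem_graded hw hv))
        · rw [iSup_neg (by omega)] at hv
          simp only [Submodule.mem_bot] at hv
          rw [hv, mul_zero]; exact zero_mem _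
      · show w * 0 ∈ tailSubmodule ℬ (a + b)
        rw [mul_zero]; exact zero_mem _
      · intro u v hu hv
        show w * (u + v) ∈ tailSubmodule ℬ (a + b)
        rw [mul_add]; exact add_mem hu hv
    · rw [iSup_neg (by omega)] at hw
      simp only [Submodule.mem_bot] at hw
      rw [hw, zero_mul]; exact zero_mem _
  · show (0 : A₀) * z ∈ tailSubmodule ℬ (a + b)
    rw [zero_mul]; exact zero_mem _
  · intro u v hu hv
    show (u + v) * z ∈ tailSubmodule ℬ (a + b)
    rw [add_mul]; exact add_mem hu hv

/-- Any root of a separable polynomial in a nonnegatively graded commutative algebra is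
homogeneous of degree zero. -/
lemma mem_gradeZero_of_aeval_eq_zero {x : A₀} {p : Polynomial k₀}
    (hsep : p.Separable) (hev : Polynomial.aeval x p = 0) : x ∈ ℬ 0 := by
  classical
  set π := GradedRing.projZeroRingHom ℬ with hπ
  have hcomm : ∀ c : k₀, π (algebraMap k₀ A₀ c) = algebraMap k₀ A₀ c := by
    intro c
    have hmem : algebraMap k₀ A₀ c ∈ ℬ 0 := by
      rw [Algebra.algebraMap_eq_smul_one]
      exact Submodule.smul_mem _ _ (SetLike.one_mem_graded ℬ)
    exact DirectSum.decompose_of_mem_same ℬ hmem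
  let φ : A₀ →ₐ[k₀] A₀ := { π with commutes' := hcomm }
  set x₀ := φ x with hx₀def
  have hx₀mem : x₀ ∈ ℬ 0 := by
    show (DirectSum.decompose ℬ x 0 : A₀) ∈ ℬ 0
    exact SetLike.coe_mem _
  have hev₀ : Polynomial.aeval x₀ p = 0 := by
    rw [hx₀def, Polynomial.aeval_algHom_apply, hev, map_zero]
  obtain ⟨a, b, hab⟩ := hsep
  have hu : Polynomial.aeval x₀ b *
      Polynomial.aeval x₀ (Polynomial.derivative p) = 1 := by
    have h := congrArg (Polynomial.aeval x₀) hab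
    simpa [hev₀] using h
  set r := x - x₀ with hr
  obtain ⟨c, hc⟩ := Polynomial.binomExpansion (p.map (algebraMap k₀ A₀)) x₀ r
  have hx : x₀ + r = x := by rw [hr]; ring
  rw [hx] at hc
  have heval : ∀ (q : Polynomial k₀) (y : A₀),
      (q.map (algebraMap k₀ A₀)).eval y = Polynomial.aeval y q := by
    intro q y; rw [Polynomial.eval_map]; rfl
  rw [heval _ _, heval _ _, Polynomial.derivative_map, heval _ _, hev, hev₀] at hc
  -- hc : 0 = 0 + aeval x₀ p' * r + c * r ^ 2
  have hkey : Polynomial.aeval x₀ (Polynomial.derivative p) * r + c * r ^ 2 = 0 := by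
    linear_combination -hc
  have hstep : r = Polynomial.aeval x₀ b * (-c) * (r * r) := by
    linear_combination Polynomial.aeval x₀ b * hkey - r * hu
  have claim : ∀ m : ℕ, r ∈ tailSubmodule ℬ (m + 1) := by
    intro m
    induction m with
    | zero =>
      refine mem_tailSubmodule_of_components ℬ 1 r fun i hi => ?_
      interval_cases i
      have h1 : (DirectSum.decompose ℬ x 0 : A₀) = x₀ := rfl
      have h2 : (DirectSum.decompose ℬ x₀ 0 : A₀) = x₀ :=
        DirectSum.decompose_of_mem_same ℬ hx₀mem
      rw [hr, DirectSum.decompose_sub]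
      simp [DirectSum.sub_apply, h1, h2]
    | succ m ih =>
      have h2 : r * r ∈ tailSubmodule ℬ ((m + 1) + (m + 1)) :=
        tailSubmodule_mul ℬ ih ih
      have h3 : Polynomial.aeval x₀ b * (-c) ∈ tailSubmodule ℬ 0 :=
        mem_tailSubmodule_zero ℬ _
      have h4 := tailSubmodule_mul ℬ h3 h2
      rw [hstep]
      exact tailSubmodule_antitone ℬ (by omega) h4
  have hr0 : r = 0 := by
    classical
    have hcomp : ∀ i, (DirectSum.decompose ℬ r i : A₀) = 0 := fun i =>
      components_eq_zero_of_mem_tailSubmodule ℬ (claim i) i (by omega)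
    rw [← DirectSum.sum_support_decompose ℬ r]
    exact Finset.sum_eq_zero fun i _ => hcomp i
  have hxx : x = x₀ := by
    have := sub_eq_zero.mp (hr ▸ hr0)
    exact this
  rw [hxx]; exact hx₀mem

end Aux

/-- For a finitely generated commutative Hopf algebra `A` over a field
`k` of characteristic zero equipped with a Hopf algebra grading `A = ⊕ A(i)`, the largest
separable subalgebra `π₀A` of `A` coincides with the largest separable subalgebra
`π₀A(0)` of `A(0)`; in particular `π₀A ⊆ A(0)`. -/
theorem piZero_eq_piZero_gradeZero
    [CharZero k] [Algebra.FiniteType k A]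
    (hcomul : ∀ n : ℕ, ∀ x ∈ 𝒜 n,
      Coalgebra.comul (R := k) x ∈
        ⨆ (p : ℕ × ℕ) (_ : p.1 + p.2 = n),
          LinearMap.range (TensorProduct.map (𝒜 p.1).subtype (𝒜 p.2).subtype))
    (hcounit : ∀ n : ℕ, 0 < n → ∀ x ∈ 𝒜 n, Coalgebra.counit (R := k) x = 0) :
    piZero k A =
      sSup {C : Subalgebra k A |
        Algebra.IsSeparable k ↥C ∧ C ≤ gradeZeroSubalgebra k A 𝒜} ∧
    piZero k A ≤ gradeZeroSubalgebra k A 𝒜 := by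
  have key : ∀ C : Subalgebra k A, Algebra.IsSeparable k ↥C →
      C ≤ gradeZeroSubalgebra k A 𝒜 := by
    intro C hC x hx
    have hsep : IsSeparable k (⟨x, hx⟩ : C) := Algebra.IsSeparable.isSeparable k _
    have hev : Polynomial.aeval x (minpoly k (⟨x, hx⟩ : C)) = 0 := by
      have h := Polynomial.aeval_algHom_apply C.val (⟨x, hx⟩ : C)
        (minpoly k (⟨x, hx⟩ : C))
      simpa [minpoly.aeval] using h
    exact mem_gradeZero_of_aeval_eq_zero 𝒜 hsep hev
  constructor
  · unfold piZero
    congr 1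
    ext C
    simp only [Set.mem_setOf_eq]
    exact ⟨fun h => ⟨h, key C h⟩, fun h => h.1⟩
  · exact sSup_le fun C hC => key C hC
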